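/- There exists an induction model (A, 0, S) together with operations + and · satisfying the recursion equations for addition and multiplication, in which no binary operation E : A × A → A satisfies the exponentiation recursion equations E(x, 0) = S(0) and E(x, S y) = E(x, y) · x for all x, y ∈ A. Concretely, ZMod 4 with S(x) = x+1 and the usual + and · is such a model. -/

import Mathlib

theorem zmod4_no_exponentiation :
    (∀ G : Set (ZMod 4), (0 : ZMod 4) ∈ G → (∀ y ∈ G, y + 1 ∈ G) → G = Set.univ) ∧
    (∀ x : ZMod 4, x + 0 = x) ∧
    (∀ x y : ZMod 4, x + (y + 1) = (x + y) + 1) ∧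
    (∀ x : ZMod 4, x * 0 = 0) ∧
    (∀ x y : ZMod 4, x * (y + 1) = x * y + x) ∧
    ¬ ∃ E : ZMod 4 × ZMod 4 → ZMod 4,
        (∀ x : ZMod 4, E (x, 0) = (0 : ZMod 4) + 1) ∧
        ∀ x y : ZMod 4, E (x, y + 1) = E (x, y) * x := by
  refine ⟨?_, fun x => by ring, fun x y => by ring, fun x => by ring, fun x y => by ring, ?_⟩
  · intro G h0 hS
    have h1 := hS 0 h0
    have h2 := hS _ h1
    have h3 := hS _ h2
    ext x
    simp only [Set.mem_univ, iff_true]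
    fin_cases x
    · exact h0
    · exact h1
    · exact h2
    · exact h3
  · rintro ⟨E, h0, hS⟩
    have e0 := h0 2
    have e1 := hS 2 0
    have e2 := hS 2 1
    have e3 := hS 2 2
    have e4 := hS 2 3
    rw [show (0:ZMod 4) + 1 = 1 by decide] at e1
    rw [show (1:ZMod 4) + 1 = 2 by decide] at e2
    rw [show (2:ZMod 4) + 1 = 3 by decide] at e3
    rw [show (3:ZMod 4) + 1 = 0 by decide] at e4
    rw [e0] at e1
    rw [e1] at e2
    rw [e2] at e3
    rw [e3, e0] at e4
    exact absurd e4 (by decide)
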